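/- In a budget-aggregation game with binary symmetric separable strictly convex utilities, the number of Nash equilibria is at most min(m!, prod over i of |A_i|). -/

import Mathlib

def IsStrategy (n m : ℕ) (d : Fin m → ℝ) : Prop :=
  (∀ x, 0 ≤ d x) ∧ ∑ x, d x = 1 / n

def IsNash (n m : ℕ) (u : Fin n → (Fin m → ℝ) → ℝ) (δ : Fin n → Fin m → ℝ) : Prop :=
  (∀ i, IsStrategy n m (δ i)) ∧
  ∀ i, ∀ d, IsStrategy n m d →
    u i ((∑ j, δ j) - δ i + d) ≤ u i (∑ j, δ j)

noncomputable section NashAux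

/-- point mass strategy -/
def pm (n : ℕ) (m : ℕ) (a : Fin m) : Fin m → ℝ := fun x => if x = a then 1 / n else 0

lemma pm_def (n m : ℕ) (a x : Fin m) : pm n m a x = if x = a then 1 / (n:ℝ) else 0 := rfl

lemma pm_isStrategy (n m : ℕ) (a : Fin m) : IsStrategy n m (pm n m a) := by
  constructor
  · intro x
    unfold pm
    split
    · positivity
    · exact le_refl 0
  · simp [pm, Finset.sum_ite_eq']

/-- move all of `e y`'s mass onto `x` -/
def move {m : ℕ} (e : Fin m → ℝ) (x y : Fin m) : Fin m → ℝ :=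
  fun z => e z + e y * ((if z = x then (1:ℝ) else 0) - (if z = y then 1 else 0))

lemma move_apply_x {m : ℕ} {e : Fin m → ℝ} {x y : Fin m} (hxy : x ≠ y) :
    move e x y x = e x + e y := by simp [move, hxy]

lemma move_apply_y {m : ℕ} {e : Fin m → ℝ} {x y : Fin m} (hxy : x ≠ y) :
    move e x y y = 0 := by
  simp [move, Ne.symm hxy]

lemma move_apply_other {m : ℕ} {e : Fin m → ℝ} {x y z : Fin m} (hzx : z ≠ x) (hzy : z ≠ y) :
    move e x y z = e z := by simp [move, hzx, hzy]

lemma move_isStrategy {n m : ℕ} {e : Fin m → ℝ} {x y : Fin m} (hxy : x ≠ y)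
    (he : IsStrategy n m e) : IsStrategy n m (move e x y) := by
  obtain ⟨h0, hsum⟩ := he
  constructor
  · intro z
    by_cases hzx : z = x
    · subst hzx
      rw [move_apply_x hxy]
      exact add_nonneg (h0 _) (h0 _)
    · by_cases hzy : z = y
      · subst hzy
        rw [move_apply_y hxy]
      · rw [move_apply_other hzx hzy]
        exact h0 z
  · simp only [move]
    rw [Finset.sum_add_distrib, ← Finset.mul_sum, Finset.sum_sub_distrib]
    simp [hsum, Finset.sum_ite_eq']


/-- Splitting mass between two alternatives is strictly worse than one of the extremes. -/
lemma core_split {G : ℝ → ℝ} (hconv : StrictConvexOn ℝ (Set.Icc (0:ℝ) 1) G)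
    {a b p q : ℝ} (ha : 0 ≤ a) (hb : 0 ≤ b) (hp : 0 < p) (hq : 0 < q)
    (ha1 : a + (p + q) ≤ 1) (hb1 : b + (p + q) ≤ 1)
    (h1 : G (a + (p + q)) + G b ≤ G (a + p) + G (b + q))
    (h2 : G a + G (b + (p + q)) ≤ G (a + p) + G (b + q)) : False := by
  have hc : 0 < p + q := by linarith
  have hl : 0 < q / (p + q) := by positivity
  have hm : 0 < p / (p + q) := by positivity
  have hlm : q / (p + q) + p / (p + q) = 1 := by field_simp; ring
  have hxy : a ≠ a + (p + q) := by intro h; nlinarith [congrArg id h]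
  have hmem1 : a ∈ Set.Icc (0:ℝ) 1 := ⟨ha, by linarith⟩
  have hmem2 : a + (p + q) ∈ Set.Icc (0:ℝ) 1 := ⟨by linarith, ha1⟩
  have hmem3 : b ∈ Set.Icc (0:ℝ) 1 := ⟨hb, by linarith⟩
  have hmem4 : b + (p + q) ∈ Set.Icc (0:ℝ) 1 := ⟨by linarith, hb1⟩
  have hxy' : b + (p + q) ≠ b := by intro h; nlinarith [congrArg id h]
  have c1 := hconv.2 hmem1 hmem2 hxy hl hm hlm
  have c2 := hconv.2 hmem4 hmem3 hxy' hl hm hlm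
  rw [smul_eq_mul, smul_eq_mul, smul_eq_mul, smul_eq_mul] at c1 c2
  have e1 : q / (p + q) * a + p / (p + q) * (a + (p + q)) = a + p := by
    field_simp; ring
  have e2 : q / (p + q) * (b + (p + q)) + p / (p + q) * b = b + q := by
    field_simp; ring
  rw [e1] at c1
  rw [e2] at c2
  -- c1 : G (a+p) < λ G a + μ G (a+c), c2 : G (b+q) < λ G (b+c) + μ G b
  have heq : q / (p + q) * (G (a + p) + G (b + q)) + p / (p + q) * (G (a + p) + G (b + q))
      = G (a + p) + G (b + q) := by
    rw [← add_mul, hlm, one_mul]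
  nlinarith [mul_le_mul_of_nonneg_left h1 hm.le, mul_le_mul_of_nonneg_left h2 hl.le, c1, c2, heq]

/-- If `sa ≤ sb`, moving the `e`-mass from `a` to `b` strictly improves. -/
lemma core_argmax {G : ℝ → ℝ} (hconv : StrictConvexOn ℝ (Set.Icc (0:ℝ) 1) G)
    {sa sb e : ℝ} (he : 0 < e) (hp0 : 0 ≤ sa - e) (hq1 : sb + e ≤ 1)
    (hab : sa ≤ sb)
    (hN : G (sa - e) + G (sb + e) ≤ G sa + G sb) : False := by
  set p := sa - e with hpe
  set q := sb + e with hqe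
  have hqp : 0 < q - p := by rw [hpe, hqe]; linarith
  set l := (q - sa) / (q - p) with hl
  set u := (sa - p) / (q - p) with hu
  have hl0 : 0 < l := by
    rw [hl]
    apply div_pos _ hqp
    rw [hqe]; linarith
  have hu0 : 0 < u := by
    rw [hu]
    apply div_pos _ hqp
    rw [hpe]; linarith
  have hlm : l + u = 1 := by
    rw [hl, hu]
    field_simp
    ring
  have hpq : p ≠ q := by intro h; rw [h] at hqp; linarith
  have hmemp : p ∈ Set.Icc (0:ℝ) 1 := ⟨hp0, by rw [hpe]; linarith⟩
  have hmemq : q ∈ Set.Icc (0:ℝ) 1 := ⟨by rw [hqe]; linarith, hq1⟩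
  have c1 := hconv.2 hmemp hmemq hpq hl0 hu0 hlm
  have c2 := hconv.2 hmemp hmemq hpq hu0 hl0 (by linarith)
  rw [smul_eq_mul, smul_eq_mul, smul_eq_mul, smul_eq_mul] at c1 c2
  have e1 : l * p + u * q = sa := by
    rw [hl, hu]; field_simp; ring
  have e2 : u * p + l * q = sb := by
    rw [hl, hu]; field_simp; rw [hpe, hqe]; ring
  rw [e1] at c1
  rw [e2] at c2
  have heq : l * G p + u * G q + (u * G p + l * G q) = G p + G q := by
    have : l * G p + u * G q + (u * G p + l * G q) = (l + u) * (G p + G q) := by ring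
    rw [this, hlm, one_mul]
  linarith

theorem nash_char {n m : ℕ} (hn : 0 < n) (A : Fin n → Finset (Fin m))
    (hA : ∀ i, (A i).Nonempty)
    (g : Fin n → ℝ → ℝ)
    (hconv : ∀ i, StrictConvexOn ℝ (Set.Icc (0:ℝ) 1) (g i))
    (hmono : ∀ i, StrictMonoOn (g i) (Set.Icc (0:ℝ) 1))
    (δ : Fin n → Fin m → ℝ)
    (hδ : IsNash n m (fun i d => ∑ x ∈ A i, g i (d x)) δ) (i : Fin n) :
    ∃ a ∈ A i, δ i = pm n m a ∧
      ∀ b ∈ A i, b ≠ a → (∑ j, δ j) b < (∑ j, δ j) a := by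
  classical
  obtain ⟨hstrat, hbr⟩ := hδ
  have h0 : ∀ j x, 0 ≤ δ j x := fun j x => (hstrat j).1 x
  have hsumj : ∀ j, ∑ x, δ j x = 1 / (n:ℝ) := fun j => (hstrat j).2
  have hnR : (0:ℝ) < 1 / (n:ℝ) := by
    have : (0:ℝ) < (n:ℝ) := by exact_mod_cast hn
    positivity
  set s : Fin m → ℝ := fun x => ∑ j, δ j x with hs
  have hsum_apply : ∀ x, (∑ j, δ j) x = s x := by
    intro x; rw [hs]; simp [Finset.sum_apply]
  have hjle : ∀ j x, δ j x ≤ 1 / (n:ℝ) := by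
    intro j x
    calc δ j x ≤ ∑ y, δ j y :=
          Finset.single_le_sum (fun y _ => h0 j y) (Finset.mem_univ x)
      _ = 1 / (n:ℝ) := hsumj j
  set t : Fin m → ℝ := fun x => s x - δ i x with htdef
  clear_value s t
  have hts : ∀ x, t x = ∑ j ∈ Finset.univ.erase i, δ j x := by
    intro x
    simp only [htdef, hs]
    rw [← Finset.add_sum_erase _ _ (Finset.mem_univ i)]
    ring
  have ht0 : ∀ x, 0 ≤ t x := fun x => by
    rw [hts]; exact Finset.sum_nonneg (fun j _ => h0 j x)
  have ht1 : ∀ x, t x ≤ 1 - 1 / (n:ℝ) := by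
    intro x
    rw [hts]
    have hcard : (Finset.univ.erase i).card = n - 1 := by
      rw [Finset.card_erase_of_mem (Finset.mem_univ i)]
      simp
    calc ∑ j ∈ Finset.univ.erase i, δ j x
        ≤ ∑ _j ∈ Finset.univ.erase i, (1 / (n:ℝ)) :=
          Finset.sum_le_sum (fun j _ => hjle j x)
      _ = ((n - 1 : ℕ) : ℝ) * (1 / (n:ℝ)) := by
          rw [Finset.sum_const, hcard, nsmul_eq_mul]
      _ = 1 - 1 / (n:ℝ) := by
          rw [Nat.cast_sub hn]
          have hne : (n:ℝ) ≠ 0 := by positivity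
          field_simp
          norm_num
  have hsx : ∀ x, s x = t x + δ i x := by
    intro x; simp only [htdef]; ring
  have hN : ∀ d, IsStrategy n m d →
      ∑ x ∈ A i, g i (t x + d x) ≤ ∑ x ∈ A i, g i (s x) := by
    intro d hd
    have hb := hbr i d hd
    have e1 : ∀ x, ((∑ j, δ j) - δ i + d) x = t x + d x := by
      intro x
      simp [Pi.add_apply, Pi.sub_apply, htdef, hsum_apply]
    calc ∑ x ∈ A i, g i (t x + d x)
        = ∑ x ∈ A i, g i (((∑ j, δ j) - δ i + d) x) := by
          exact Finset.sum_congr rfl (fun x _ => by rw [e1])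
      _ ≤ ∑ x ∈ A i, g i ((∑ j, δ j) x) := hb
      _ = ∑ x ∈ A i, g i (s x) := Finset.sum_congr rfl (fun x _ => by rw [hsum_apply])
  -- pairwise sum bound
  have hpair : ∀ x y : Fin m, x ≠ y → δ i x + δ i y ≤ 1 / (n:ℝ) := by
    intro x y hxy
    calc δ i x + δ i y = ∑ z ∈ ({x, y} : Finset (Fin m)), δ i z := (Finset.sum_pair hxy).symm
      _ ≤ ∑ z, δ i z := Finset.sum_le_sum_of_subset_of_nonneg
          (Finset.subset_univ _) (fun z _ _ => h0 i z)
      _ = 1 / (n:ℝ) := hsumj i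
  -- splitting sums over A i at two distinct members
  have split3 : ∀ (x y : Fin m), x ≠ y → x ∈ A i → y ∈ A i → ∀ F : Fin m → ℝ,
      ∑ z ∈ A i, F z = F x + (F y + ∑ z ∈ ((A i).erase x).erase y, F z) := by
    intro x y hxy hxA hyA F
    rw [Finset.add_sum_erase _ F (Finset.mem_erase_of_ne_of_mem hxy.symm hyA),
      Finset.add_sum_erase _ F hxA]
  -- Claim 1 : no mass outside A i
  have claim1 : ∀ x, x ∉ A i → δ i x = 0 := by
    intro x₀ hx₀
    by_contra hne
    have hpos : 0 < δ i x₀ := lt_of_le_of_ne (h0 i x₀) (Ne.symm hne)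
    obtain ⟨a, ha⟩ := hA i
    have hax : a ≠ x₀ := fun h => hx₀ (h ▸ ha)
    have hds : IsStrategy n m (move (δ i) a x₀) := move_isStrategy hax (hstrat i)
    have hNd := hN _ hds
    have hsplit1 : ∑ x ∈ A i, g i (t x + move (δ i) a x₀ x)
        = g i (s a + δ i x₀) + ∑ x ∈ (A i).erase a, g i (s x) := by
      rw [← Finset.add_sum_erase _ _ ha]
      congr 1
      · rw [move_apply_x hax, hsx a]; ring_nf
      · refine Finset.sum_congr rfl (fun x hx => ?_)
        have hxa : x ≠ a := Finset.ne_of_mem_erase hx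
        have hxx0 : x ≠ x₀ := fun h => hx₀ (h ▸ Finset.mem_of_mem_erase hx)
        rw [move_apply_other hxa hxx0, ← hsx x]
    have hsplit2 : ∑ x ∈ A i, g i (s x)
        = g i (s a) + ∑ x ∈ (A i).erase a, g i (s x) :=
      (Finset.add_sum_erase _ _ ha).symm
    rw [hsplit1, hsplit2] at hNd
    have hsa1 : s a + δ i x₀ ≤ 1 := by
      have := ht1 a
      have := hpair a x₀ hax
      rw [hsx a]; linarith
    have hlt : g i (s a) < g i (s a + δ i x₀) := by
      apply hmono i
      · exact ⟨by rw [hsx a]; linarith [ht0 a, h0 i a], by linarith [hpos]⟩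
      · exact ⟨by rw [hsx a]; linarith [ht0 a, h0 i a, hpos.le], hsa1⟩
      · linarith
    linarith
  -- Claim 2 : support is a singleton
  have claim2 : ∀ x y, x ≠ y → 0 < δ i x → 0 < δ i y → False := by
    intro x y hxy hx hy
    have hxA : x ∈ A i := by
      by_contra h; rw [claim1 x h] at hx; exact lt_irrefl _ hx
    have hyA : y ∈ A i := by
      by_contra h; rw [claim1 y h] at hy; exact lt_irrefl _ hy
    have hd1 : IsStrategy n m (move (δ i) x y) := move_isStrategy hxy (hstrat i)
    have hd2 : IsStrategy n m (move (δ i) y x) := move_isStrategy hxy.symm (hstrat i)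
    have hoff : ∀ d : Fin m → ℝ, (∀ z, z ≠ x → z ≠ y → d z = δ i z) →
        ∑ z ∈ ((A i).erase x).erase y, g i (t z + d z)
          = ∑ z ∈ ((A i).erase x).erase y, g i (s z) := by
      intro d hd
      refine Finset.sum_congr rfl (fun z hz => ?_)
      have hzy : z ≠ y := Finset.ne_of_mem_erase hz
      have hzx : z ≠ x := Finset.ne_of_mem_erase (Finset.mem_of_mem_erase hz)
      rw [hd z hzx hzy, ← hsx z]
    have hN1 := hN _ hd1
    have hN2 := hN _ hd2
    rw [split3 x y hxy hxA hyA (fun z => g i (t z + move (δ i) x y z)),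
      split3 x y hxy hxA hyA (fun z => g i (s z)),
      move_apply_x hxy, move_apply_y hxy,
      hoff _ (fun z hzx hzy => move_apply_other hzx hzy),
      add_zero, hsx x, hsx y] at hN1
    rw [split3 x y hxy hxA hyA (fun z => g i (t z + move (δ i) y x z)),
      split3 x y hxy hxA hyA (fun z => g i (s z)),
      move_apply_x hxy.symm, move_apply_y hxy.symm,
      hoff _ (fun z hzx hzy => move_apply_other hzy hzx),
      add_zero, hsx x, hsx y, add_comm (δ i y) (δ i x)] at hN2
    have h1 : g i (t x + (δ i x + δ i y)) + g i (t y)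
        ≤ g i (t x + δ i x) + g i (t y + δ i y) := by linarith
    have h2 : g i (t x) + g i (t y + (δ i x + δ i y))
        ≤ g i (t x + δ i x) + g i (t y + δ i y) := by linarith
    exact core_split (hconv i) (ht0 x) (ht0 y) hx hy
      (by linarith [ht1 x, hpair x y hxy])
      (by linarith [ht1 y, hpair x y hxy]) h1 h2
  -- extract the support point
  have hex : ∃ a, 0 < δ i a := by
    by_contra h
    push_neg at h
    have hz : ∑ x, δ i x = 0 :=
      Finset.sum_eq_zero (fun x _ => le_antisymm (h x) (h0 i x))
    rw [hsumj i] at hz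
    linarith
  obtain ⟨a, hapos⟩ := hex
  have haA : a ∈ A i := by
    by_contra h; rw [claim1 a h] at hapos; exact lt_irrefl _ hapos
  have hzero : ∀ z, z ≠ a → δ i z = 0 := by
    intro z hz
    by_contra h
    exact claim2 z a hz (lt_of_le_of_ne (h0 i z) (Ne.symm h)) hapos
  have hval : δ i a = 1 / (n:ℝ) := by
    have h1 := hsumj i
    rw [Finset.sum_eq_single_of_mem a (Finset.mem_univ a)
      (fun z _ hz => hzero z hz)] at h1
    exact h1
  have hpm : δ i = pm n m a := by
    funext z
    rw [pm_def]
    by_cases hz : z = a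
    · subst hz; rw [if_pos rfl]; exact hval
    · rw [if_neg hz]; exact hzero z hz
  refine ⟨a, haA, hpm, ?_⟩
  intro b hbA hba
  by_contra hge
  push_neg at hge
  rw [hsum_apply, hsum_apply] at hge
  -- hge : s a ≤ s b
  have hdb : IsStrategy n m (pm n m b) := pm_isStrategy n m b
  have hNb := hN _ hdb
  have hab : a ≠ b := Ne.symm hba
  rw [split3 a b hab haA hbA (fun z => g i (t z + pm n m b z)),
    split3 a b hab haA hbA (fun z => g i (s z))] at hNb
  have e1 : t a + pm n m b a = s a - 1 / (n:ℝ) := by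
    rw [pm_def, if_neg hab]
    simp only [htdef, hval]
    ring
  have e2 : t b + pm n m b b = s b + 1 / (n:ℝ) := by
    rw [pm_def, if_pos rfl]
    simp only [htdef, hzero b hba]
    ring
  have hoffb : ∑ z ∈ ((A i).erase a).erase b, g i (t z + pm n m b z)
      = ∑ z ∈ ((A i).erase a).erase b, g i (s z) := by
    refine Finset.sum_congr rfl (fun z hz => ?_)
    have hzb : z ≠ b := Finset.ne_of_mem_erase hz
    have hza : z ≠ a := Finset.ne_of_mem_erase (Finset.mem_of_mem_erase hz)
    rw [pm_def, if_neg hzb]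
    have htz : t z = s z := by simp [htdef, hzero z hza]
    rw [add_zero, htz]
  rw [e1, e2, hoffb] at hNb
  have hp0 : 0 ≤ s a - 1 / (n:ℝ) := by
    have h1 := hsx a
    rw [hval] at h1
    linarith [ht0 a]
  have hq1 : s b + 1 / (n:ℝ) ≤ 1 := by
    have h1 := hsx b
    rw [hzero b hba] at h1
    linarith [ht1 b]
  exact core_argmax (hconv i) hnR hp0 hq1 hge (by linarith)


/-- the element of `A i` that is ranked highest by the permutation `σ` -/
noncomputable def sel {n m : ℕ} (A : Fin n → Finset (Fin m)) (hA : ∀ i, (A i).Nonempty)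
    (σ : Equiv.Perm (Fin m)) (i : Fin n) : Fin m :=
  σ (((A i).image σ.symm).max' ((hA i).image σ.symm))

/-- with binary symmetric separable strictly convex utilities,
there are finitely many Nash equilibria, and their number is at most
`min(m!, ∏ᵢ |Aᵢ|)`. -/
theorem convex_case_nash_count_bound
    (n m : ℕ) (hn : 0 < n)
    (A : Fin n → Finset (Fin m)) (hA : ∀ i, (A i).Nonempty)
    (g : Fin n → ℝ → ℝ)
    (hcont : ∀ i, Continuous (g i))
    (hconv : ∀ i, StrictConvexOn ℝ (Set.Icc (0 : ℝ) 1) (g i))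
    (hmono : ∀ i, StrictMonoOn (g i) (Set.Icc (0 : ℝ) 1)) :
    {δ : Fin n → Fin m → ℝ |
        IsNash n m (fun i d => ∑ x ∈ A i, g i (d x)) δ}.Finite ∧
    {δ : Fin n → Fin m → ℝ |
        IsNash n m (fun i d => ∑ x ∈ A i, g i (d x)) δ}.ncard ≤
      min (Nat.factorial m) (∏ i, (A i).card) := by
  classical
  set S := {δ : Fin n → Fin m → ℝ |
      IsNash n m (fun i d => ∑ x ∈ A i, g i (d x)) δ} with hS
  have key : ∀ δ ∈ S, ∃ f : Fin n → Fin m, (∀ i, f i ∈ A i) ∧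
      (δ = fun i => pm n m (f i)) ∧
      (∀ i b, b ∈ A i → b ≠ f i → (∑ j, δ j) b < (∑ j, δ j) (f i)) := by
    intro δ hδ
    choose f hf1 hf2 hf3 using nash_char hn A hA g hconv hmono δ hδ
    exact ⟨f, hf1, funext hf2, fun i b hb hne => hf3 i b hb hne⟩
  -- injection into selection functions
  have hsub1 : S ⊆ (fun f : Fin n → Fin m => fun i => pm n m (f i)) ''
      ↑(Fintype.piFinset A) := by
    intro δ hδ
    obtain ⟨f, hf1, hfeq, -⟩ := key δ hδ
    exact ⟨f, by simpa [Fintype.mem_piFinset] using hf1, hfeq.symm⟩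
  have hfin1 : ((fun f : Fin n → Fin m => fun i => pm n m (f i)) ''
      ↑(Fintype.piFinset A)).Finite :=
    (Fintype.piFinset A).finite_toSet.image _
  have hfin : S.Finite := hfin1.subset hsub1
  have hbound2 : S.ncard ≤ ∏ i, (A i).card := by
    calc S.ncard ≤ ((fun f : Fin n → Fin m => fun i => pm n m (f i)) ''
          ↑(Fintype.piFinset A)).ncard := Set.ncard_le_ncard hsub1 hfin1
      _ ≤ (↑(Fintype.piFinset A) : Set (Fin n → Fin m)).ncard :=
          Set.ncard_image_le ((Fintype.piFinset A).finite_toSet)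
      _ = (Fintype.piFinset A).card := Set.ncard_coe_finset _
      _ = ∏ i, (A i).card := Fintype.card_piFinset A
  -- injection into permutations
  have hsub2 : S ⊆ (fun σ : Equiv.Perm (Fin m) => fun i => pm n m (sel A hA σ i)) ''
      Set.univ := by
    intro δ hδ
    obtain ⟨f, hf1, hfeq, hf3⟩ := key δ hδ
    set σ := Tuple.sort (∑ j, δ j) with hσ
    have mono := Tuple.monotone_sort (∑ j, δ j)
    refine ⟨σ, Set.mem_univ _, ?_⟩
    have hsel : ∀ i, sel A hA σ i = f i := by
      intro i
      have hkmem := Finset.max'_mem ((A i).image σ.symm) ((hA i).image σ.symm)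
      obtain ⟨b, hbA, hbk⟩ := Finset.mem_image.mp hkmem
      have hselA : sel A hA σ i ∈ A i := by
        unfold sel
        rw [← hbk]
        simpa using hbA
      have hmax : ∀ c ∈ A i, (∑ j, δ j) c ≤ (∑ j, δ j) (sel A hA σ i) := by
        intro c hc
        have h1 : σ.symm c ≤ ((A i).image σ.symm).max' ((hA i).image σ.symm) :=
          Finset.le_max' _ _ (Finset.mem_image_of_mem _ hc)
        have h2 := mono h1
        simpa [sel, ← hσ] using h2
      by_contra hne
      have hlt := hf3 i (sel A hA σ i) hselA hne
      have hle := hmax (f i) (hf1 i)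
      linarith
    rw [hfeq]
    funext i
    show pm n m (sel A hA σ i) = pm n m (f i)
    rw [hsel i]
  have hbound1 : S.ncard ≤ Nat.factorial m := by
    calc S.ncard ≤ ((fun σ : Equiv.Perm (Fin m) => fun i => pm n m (sel A hA σ i)) ''
          Set.univ).ncard :=
          Set.ncard_le_ncard hsub2 (Set.finite_univ.image _)
      _ ≤ (Set.univ : Set (Equiv.Perm (Fin m))).ncard :=
          Set.ncard_image_le Set.finite_univ
      _ = Nat.factorial m := by
          rw [Set.ncard_univ, Nat.card_eq_fintype_card, Fintype.card_perm,
            Fintype.card_fin]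
  exact ⟨hfin, le_min hbound1 hbound2⟩

end NashAux
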